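/- Let f : ℝ → ℝ be continuous and suppose there exist points x_1 < … < x_m such that f is affine on each of the m + 1 intervals (−∞, x_1], [x_1, x_2], …, [x_m, ∞). Then σ ∘ f (where σ(x) = max(0, x)) is continuous, piecewise affine with finitely many pieces, and has at most 2m + 1 knots: the set of points at which σ ∘ f is not differentiable has cardinality at most 2m + 1 (at most the m knots of f that are retained plus at most m + 1 new knots created at roots of f). -/

import Mathlib

/-- The rectified linear unit `σ(x) = max(0, x)`. -/
noncomputable def relu (x : ℝ) : ℝ := max 0 x

/-- For knot points `t 0 < t 1 < ⋯ < t (m-1)`, the `r`-th piece (`0 ≤ r ≤ m`) of the real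
line: `(-∞, t 0]` for `r = 0`, `[t (r-1), t r]` for `0 < r < m`, and `[t (m-1), ∞)` for
`r = m` (all of `ℝ` if `m = 0`). -/
def piece (m : ℕ) (t : ℕ → ℝ) (r : ℕ) : Set ℝ :=
  {x | (1 ≤ r → t (r - 1) ≤ x) ∧ (r < m → x ≤ t r)}

/-- The open version of a piece. -/
def pieceo (m : ℕ) (t : ℕ → ℝ) (r : ℕ) : Set ℝ :=
  {x | (1 ≤ r → t (r - 1) < x) ∧ (r < m → x < t r)}

lemma pieceo_subset (m : ℕ) (t : ℕ → ℝ) (r : ℕ) : pieceo m t r ⊆ piece m t r :=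
  fun _ hx => ⟨fun h => (hx.1 h).le, fun h => (hx.2 h).le⟩

lemma isOpen_pieceo (m : ℕ) (t : ℕ → ℝ) (r : ℕ) : IsOpen (pieceo m t r) := by
  by_cases h1 : 1 ≤ r <;> by_cases h2 : r < m
  · have : pieceo m t r = Set.Ioi (t (r - 1)) ∩ Set.Iio (t r) := by
      ext x; simp [pieceo, h1, h2]
    rw [this]; exact isOpen_Ioi.inter isOpen_Iio
  · have : pieceo m t r = Set.Ioi (t (r - 1)) := by
      ext x; simp [pieceo, h1, h2]
    rw [this]; exact isOpen_Ioi
  · have : pieceo m t r = Set.Iio (t r) := by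
      ext x; simp [pieceo, h1, h2]
    rw [this]; exact isOpen_Iio
  · have : pieceo m t r = Set.univ := by
      ext x; simp [pieceo, h1, h2]
    rw [this]; exact isOpen_univ

lemma sign_aux (A B x z : ℝ) (hA : A ≠ 0) (h1 : A * x + B < 0) (h2 : 0 < A * z + B) :
    (x < -B / A ∧ -B / A < z) ∨ (z < -B / A ∧ -B / A < x) := by
  have hρ : A * (-B / A) + B = 0 := by field_simp; ring
  rcases hA.lt_or_gt with h | h
  · right; constructor <;> nlinarith
  · left; constructor <;> nlinarith

lemma mem_pieceo_of_between (m : ℕ) (t : ℕ → ℝ) (r : ℕ) {x ρ z : ℝ}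
    (hx : x ∈ piece m t r) (hz : z ∈ pieceo m t r)
    (h : (x < ρ ∧ ρ < z) ∨ (z < ρ ∧ ρ < x)) : ρ ∈ pieceo m t r := by
  obtain ⟨hx1, hx2⟩ := hx
  obtain ⟨hz1, hz2⟩ := hz
  constructor <;> intro hc
  · rcases h with ⟨ha, hb⟩ | ⟨ha, hb⟩
    · have := hx1 hc; linarith
    · have := hz1 hc; linarith
  · rcases h with ⟨ha, hb⟩ | ⟨ha, hb⟩
    · have := hz2 hc; linarith
    · have := hx2 hc; linarith

lemma relu_affine_on_piece (A B : ℝ) (m : ℕ) (t : ℕ → ℝ) (r : ℕ)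
    (hroot : A ≠ 0 → -B / A ∉ pieceo m t r) (hex : ∃ z, z ∈ pieceo m t r) :
    ∃ C D : ℝ, ∀ x ∈ piece m t r, relu (A * x + B) = C * x + D := by
  by_cases hA : A = 0
  · exact ⟨0, max 0 B, fun x _ => by simp [relu, hA]⟩
  obtain ⟨z, hz⟩ := hex
  have hzne : A * z + B ≠ 0 := by
    intro h
    have hzρ : z = -B / A := by field_simp; linarith
    exact hroot hA (hzρ ▸ hz)
  rcases hzne.lt_or_gt with hneg | hpos
  · refine ⟨0, 0, fun x hx => ?_⟩
    have hle : A * x + B ≤ 0 := by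
      by_contra hc
      push_neg at hc
      exact hroot hA (mem_pieceo_of_between m t r hx hz ((sign_aux A B z x hA hneg hc).symm))
    simp [relu, max_eq_left hle]
  · refine ⟨A, B, fun x hx => ?_⟩
    have hge : 0 ≤ A * x + B := by
      by_contra hc
      push_neg at hc
      exact hroot hA (mem_pieceo_of_between m t r hx hz (sign_aux A B x z hA hc hpos))
    simp [relu, max_eq_right hge]

lemma exists_pieceo_mem (m : ℕ) (t : ℕ → ℝ)
    (ht : ∀ i j, i < j → j < m → t i < t j) (x : ℝ) (hx : ∀ i < m, t i ≠ x) :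
    ∃ r ≤ m, x ∈ pieceo m t r := by
  classical
  set F := (Finset.range m).filter (fun i => t i < x) with hF
  set r := F.card with hr
  have hsub : F ⊆ Finset.range m := Finset.filter_subset _ _
  have hdc : ∀ i j, j ∈ F → i ≤ j → i ∈ F := by
    intro i j hj hij
    simp only [hF, Finset.mem_filter, Finset.mem_range] at hj ⊢
    refine ⟨lt_of_le_of_lt hij hj.1, ?_⟩
    rcases eq_or_lt_of_le hij with rfl | h
    · exact hj.2
    · exact lt_trans (ht i j h hj.1) hj.2
  have hmem : ∀ i, i ∈ F ↔ i < r := by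
    intro i
    constructor
    · intro hi
      have hss : Finset.range (i + 1) ⊆ F := fun k hk =>
        hdc k i hi (Nat.lt_succ_iff.mp (Finset.mem_range.mp hk))
      have := Finset.card_le_card hss
      simp only [Finset.card_range] at this
      omega
    · intro hi
      by_contra hni
      have hss : F ⊆ Finset.range i := by
        intro j hj
        rcases lt_or_ge j i with h | h
        · exact Finset.mem_range.mpr h
        · exact absurd (hdc i j hj h) hni
      have := Finset.card_le_card hss
      simp only [Finset.card_range] at this
      omega
  have hrm : r ≤ m := by
    have := Finset.card_le_card hsub
    simp only [Finset.card_range] at this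
    omega
  refine ⟨r, hrm, ?_, ?_⟩
  · intro h1
    have : r - 1 ∈ F := (hmem _).mpr (by omega)
    exact (Finset.mem_filter.mp this).2
  · intro h2
    have hnF : r ∉ F := fun h => lt_irrefl r ((hmem r).mp h)
    have h3 : ¬ t r < x := fun h => hnF (Finset.mem_filter.mpr ⟨Finset.mem_range.mpr h2, h⟩)
    exact lt_of_le_of_ne (not_lt.mp h3) (hx r h2).symm

lemma differentiableAt_relu_comp (f : ℝ → ℝ) (A B x : ℝ) (U : Set ℝ) (hU : U ∈ nhds x)
    (hfU : ∀ y ∈ U, f y = A * y + B) (hx : A ≠ 0 → A * x + B ≠ 0) :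
    DifferentiableAt ℝ (relu ∘ f) x := by
  by_cases hA : A = 0
  · have heq : (relu ∘ f) =ᶠ[nhds x] fun _ => max 0 B := by
      filter_upwards [hU] with y hy
      simp [relu, Function.comp, hfU y hy, hA]
    exact (differentiableAt_const _).congr_of_eventuallyEq heq
  rcases (hx hA).lt_or_gt with hneg | hpos
  · have hV : {y : ℝ | A * y + B < 0} ∈ nhds x :=
      (isOpen_lt (by continuity) continuous_const).mem_nhds hneg
    have heq : (relu ∘ f) =ᶠ[nhds x] fun _ => (0 : ℝ) := by
      filter_upwards [hU, hV] with y hy hy2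
      simp only [Function.comp, relu, hfU y hy]
      exact max_eq_left (le_of_lt hy2)
    exact (differentiableAt_const _).congr_of_eventuallyEq heq
  · have hV : {y : ℝ | 0 < A * y + B} ∈ nhds x :=
      (isOpen_lt continuous_const (by continuity)).mem_nhds hpos
    have heq : (relu ∘ f) =ᶠ[nhds x] fun y => A * y + B := by
      filter_upwards [hU, hV] with y hy hy2
      simp only [Function.comp, relu, hfU y hy]
      exact max_eq_right (le_of_lt hy2)
    exact (((differentiable_id.const_mul A).add_const B) x).congr_of_eventuallyEq heq

lemma t'_mono (m' : ℕ) (t' : ℕ → ℝ) (ht' : ∀ i j, i < j → j < m' → t' i < t' j) :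
    ∀ i k, i ≤ k → k < m' → t' i ≤ t' k := by
  intro i k hik hk
  rcases eq_or_lt_of_le hik with rfl | h
  · exact le_refl _
  · exact (ht' i k h hk).le

lemma le_of_piece (m' : ℕ) (t' : ℕ → ℝ) (ht' : ∀ i j, i < j → j < m' → t' i < t' j)
    (r : ℕ) (hr : r ≤ m') (j : ℕ) (hj : j < m') {x z : ℝ}
    (hx : x ∈ piece m' t' r) (hz : z ∈ pieceo m' t' r) :
    (t' j < z → t' j ≤ x) ∧ (z < t' j → x ≤ t' j) := by
  have hmono := t'_mono m' t' ht'
  constructor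
  · intro h
    by_cases hrm : r < m'
    · have hjr : j < r := by
        by_contra hc
        push_neg at hc
        have h1 := hmono r j hc hj
        have h2 := hz.2 hrm
        linarith
      have h1r : 1 ≤ r := by omega
      have h1 := hx.1 h1r
      have h2 := hmono j (r - 1) (by omega) (by omega)
      linarith
    · have h1 : 1 ≤ r := by omega
      have h2 := hx.1 h1
      have h3 := hmono j (r - 1) (by omega) (by omega)
      linarith
  · intro h
    by_cases h1 : 1 ≤ r
    · have hrj : r ≤ j := by
        by_contra hc
        push_neg at hc
        have h2 := hmono j (r - 1) (by omega) (by omega)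
        have h3 := hz.1 h1
        linarith
      have hrm : r < m' := lt_of_le_of_lt hrj hj
      have h2 := hx.2 hrm
      have h3 := hmono r j hrj hj
      linarith
    · have h2 := hx.2 (by omega : r < m')
      have h3 := hmono r j (by omega) hj
      linarith

lemma t'_not_mem_pieceo (m' : ℕ) (t' : ℕ → ℝ) (ht' : ∀ i j, i < j → j < m' → t' i < t' j)
    (r : ℕ) (hr : r ≤ m') (j : ℕ) (hj : j < m') : t' j ∉ pieceo m' t' r := by
  have hmono := t'_mono m' t' ht'
  intro hmem
  by_cases hrm : r < m'
  · have h2 := hmem.2 hrm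
    have hjr : j < r := by
      by_contra hc
      push_neg at hc
      have := hmono r j hc hj
      linarith
    have h1 := hmem.1 (by omega)
    have := hmono j (r - 1) (by omega) (by omega)
    linarith
  · have h1 := hmem.1 (by omega)
    have := hmono j (r - 1) (by omega) (by omega)
    linarith

lemma pieceo_nonempty (m' : ℕ) (t' : ℕ → ℝ) (ht' : ∀ i j, i < j → j < m' → t' i < t' j)
    (r : ℕ) (hr : r ≤ m') : ∃ z, z ∈ pieceo m' t' r := by
  by_cases h1 : 1 ≤ r
  · by_cases h2 : r < m'
    · have hlt : t' (r - 1) < t' r := ht' (r - 1) r (by omega) h2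
      exact ⟨(t' (r - 1) + t' r) / 2, fun _ => by linarith, fun _ => by linarith⟩
    · exact ⟨t' (r - 1) + 1, fun _ => by linarith, fun h => absurd h h2⟩
  · exact ⟨t' r - 1, fun h => absurd h h1, fun _ => by linarith⟩

/-- **Applying a ReLU to a spline with `m` knots yields at most `2m + 1` knots.** If `f`
is continuous and affine on each of the `m + 1` pieces determined by `t 0 < ⋯ < t (m-1)`,
then `σ ∘ f` is continuous, piecewise affine with finitely many pieces, and its set of
points of non-differentiability is finite with cardinality at most `2m + 1`. -/
theorem relu_of_spline_knot_count (f : ℝ → ℝ) (hf : Continuous f) (m : ℕ) (t : ℕ → ℝ)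
    (ht : ∀ i j, i < j → j < m → t i < t j)
    (haff : ∀ r ≤ m, ∃ a b : ℝ, ∀ x ∈ piece m t r, f x = a * x + b) :
    Continuous (relu ∘ f) ∧
    (∃ (m' : ℕ) (t' : ℕ → ℝ),
      (∀ i j, i < j → j < m' → t' i < t' j) ∧
      ∀ r ≤ m', ∃ a b : ℝ, ∀ x ∈ piece m' t' r, (relu ∘ f) x = a * x + b) ∧
    {x : ℝ | ¬ DifferentiableAt ℝ (relu ∘ f) x}.Finite ∧
    {x : ℝ | ¬ DifferentiableAt ℝ (relu ∘ f) x}.ncard ≤ 2 * m + 1 := by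
  classical
  have haff' : ∀ r : ℕ, ∃ a b : ℝ, r ≤ m → ∀ x ∈ piece m t r, f x = a * x + b := by
    intro r
    by_cases h : r ≤ m
    · obtain ⟨a, b, hab⟩ := haff r h
      exact ⟨a, b, fun _ => hab⟩
    · exact ⟨0, 0, fun hc => absurd hc h⟩
  choose a b hab using haff'
  set root : ℕ → ℝ := fun r => -(b r) / (a r) with hroot_def
  set S : Finset ℝ := ((Finset.range m).image t) ∪ ((Finset.range (m + 1)).image root)
    with hS
  have hScard : S.card ≤ 2 * m + 1 := by
    calc S.card ≤ ((Finset.range m).image t).card + ((Finset.range (m + 1)).image root).card :=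
          Finset.card_union_le _ _
      _ ≤ m + (m + 1) := add_le_add
          (Finset.card_image_le.trans (by simp)) (Finset.card_image_le.trans (by simp))
      _ = 2 * m + 1 := by ring
  have htS : ∀ i < m, t i ∈ S := by
    intro i hi
    exact Finset.mem_union_left _ (Finset.mem_image.mpr ⟨i, Finset.mem_range.mpr hi, rfl⟩)
  have hrootS : ∀ r ≤ m, root r ∈ S := by
    intro r hr
    exact Finset.mem_union_right _
      (Finset.mem_image.mpr ⟨r, Finset.mem_range.mpr (by omega), rfl⟩)
  have hdiff : ∀ x : ℝ, x ∉ (S : Set ℝ) → DifferentiableAt ℝ (relu ∘ f) x := by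
    intro x hxS
    have hxt : ∀ i < m, t i ≠ x := fun i hi he => hxS (Finset.mem_coe.mpr (he ▸ htS i hi))
    obtain ⟨r, hrm, hxr⟩ := exists_pieceo_mem m t ht x hxt
    refine differentiableAt_relu_comp f (a r) (b r) x (pieceo m t r)
      ((isOpen_pieceo m t r).mem_nhds hxr)
      (fun y hy => hab r hrm y (pieceo_subset m t r hy)) ?_
    intro hA h0
    have hxe : x = root r := by
      simp only [hroot_def]
      field_simp
      linarith
    exact hxS (Finset.mem_coe.mpr (hxe ▸ hrootS r hrm))
  have hsubset : {x : ℝ | ¬ DifferentiableAt ℝ (relu ∘ f) x} ⊆ (S : Set ℝ) := by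
    intro x hx
    by_contra h
    exact hx (hdiff x h)
  set m' := S.card with hm'
  set t' : ℕ → ℝ := fun i => (S.sort (· ≤ ·)).getD i 0 with ht'def
  have hlen : (S.sort (· ≤ ·)).length = m' := Finset.length_sort _
  have ht'strict : ∀ i j, i < j → j < m' → t' i < t' j := by
    intro i j hij hj
    have hs := (Finset.sortedLT_sort S).pairwise
    have hi' : i < (S.sort (· ≤ ·)).length := by omega
    have hj' : j < (S.sort (· ≤ ·)).length := by omega
    simp only [ht'def, List.getD_eq_getElem _ _ hi', List.getD_eq_getElem _ _ hj']
    exact List.pairwise_iff_getElem.mp hs i j hi' hj' hij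
  have hSmem : ∀ s ∈ S, ∃ j, j < m' ∧ t' j = s := by
    intro s hs
    have hmem : s ∈ S.sort (· ≤ ·) := (Finset.mem_sort _).mpr hs
    obtain ⟨i, hi, hie⟩ := List.mem_iff_getElem.mp hmem
    exact ⟨i, by omega, by simp only [ht'def, List.getD_eq_getElem _ _ hi]; exact hie⟩
  refine ⟨(continuous_const.max continuous_id).comp hf, ⟨m', t', ht'strict, ?_⟩,
    Set.Finite.subset S.finite_toSet hsubset, ?_⟩
  · intro r hr
    obtain ⟨z, hz⟩ := pieceo_nonempty m' t' ht'strict r hr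
    have hzt : ∀ i < m, t i ≠ z := by
      intro i hi he
      obtain ⟨j, hj, hje⟩ := hSmem (t i) (htS i hi)
      exact t'_not_mem_pieceo m' t' ht'strict r hr j hj (by rw [hje, he]; exact hz)
    obtain ⟨r2, hr2m, hzr2⟩ := exists_pieceo_mem m t ht z hzt
    have hsub : piece m' t' r ⊆ piece m t r2 := by
      intro x hx
      constructor
      · intro h1
        have hlt : t (r2 - 1) < z := hzr2.1 h1
        obtain ⟨j, hj, hje⟩ := hSmem (t (r2 - 1)) (htS (r2 - 1) (by omega))
        have := (le_of_piece m' t' ht'strict r hr j hj hx hz).1 (by rw [hje]; exact hlt)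
        rwa [hje] at this
      · intro h2
        have hlt : z < t r2 := hzr2.2 h2
        obtain ⟨j, hj, hje⟩ := hSmem (t r2) (htS r2 h2)
        have := (le_of_piece m' t' ht'strict r hr j hj hx hz).2 (by rw [hje]; exact hlt)
        rwa [hje] at this
    have hroot2 : a r2 ≠ 0 → -(b r2) / (a r2) ∉ pieceo m' t' r := by
      intro _ hmem
      obtain ⟨j, hj, hje⟩ := hSmem (root r2) (hrootS r2 hr2m)
      refine t'_not_mem_pieceo m' t' ht'strict r hr j hj ?_
      rw [hje]
      exact hmem
    obtain ⟨C, D, hCD⟩ := relu_affine_on_piece (a r2) (b r2) m' t' r hroot2 ⟨z, hz⟩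
    refine ⟨C, D, fun x hx => ?_⟩
    have hfx : f x = a r2 * x + b r2 := hab r2 hr2m x (hsub hx)
    simpa [Function.comp, hfx] using hCD x hx
  · calc {x : ℝ | ¬ DifferentiableAt ℝ (relu ∘ f) x}.ncard
        ≤ (S : Set ℝ).ncard := Set.ncard_le_ncard hsubset S.finite_toSet
      _ = S.card := Set.ncard_coe_finset S
      _ ≤ 2 * m + 1 := hScard
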